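/- If N is a positive integer and c is an integer with c \not\equiv 0 mod N, then for any integer d, |G(c,d;N)| \le \sqrt{N \cdot gcd(2c, N)}. -/

import Mathlib

open Complex Finset

noncomputable def gE (N : ℕ) (n : ℤ) : ℂ :=
  Complex.exp (((2 * Real.pi * n / N : ℝ) : ℂ) * Complex.I)

lemma gE_abs (N : ℕ) (n : ℤ) : ‖gE N n‖ = 1 :=
  Complex.norm_exp_ofReal_mul_I _

lemma gE_eq (N : ℕ) (n : ℤ) :
    gE N n = Complex.exp (2 * Real.pi * Complex.I * n / N) := by
  unfold gE; congr 1; push_cast; ring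

lemma gE_add (N : ℕ) (a b : ℤ) : gE N (a + b) = gE N a * gE N b := by
  rw [gE_eq, gE_eq, gE_eq, ← Complex.exp_add]; congr 1; push_cast; ring

lemma gE_conj (N : ℕ) (n : ℤ) : (starRingEnd ℂ) (gE N n) = gE N (-n) := by
  unfold gE
  rw [← Complex.exp_conj]
  congr 1
  rw [map_mul, Complex.conj_ofReal, Complex.conj_I]
  push_cast; ring

lemma gE_dvd (N : ℕ) (hN : 0 < N) {n : ℤ} (h : (N : ℤ) ∣ n) : gE N n = 1 := by
  obtain ⟨k, rfl⟩ := h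
  rw [gE_eq]
  have hNne : (N : ℂ) ≠ 0 := Nat.cast_ne_zero.mpr hN.ne'
  have : 2 * Real.pi * Complex.I * ((N : ℤ) * k : ℤ) / (N : ℂ)
      = (k : ℂ) * (2 * Real.pi * Complex.I) := by
    push_cast; field_simp
  rw [this, Complex.exp_int_mul_two_pi_mul_I]

lemma gE_ne_one (N : ℕ) (hN : 0 < N) {n : ℤ} (h : ¬ (N : ℤ) ∣ n) : gE N n ≠ 1 := by
  rw [gE_eq]
  intro he
  rw [Complex.exp_eq_one_iff] at he
  obtain ⟨k, hk⟩ := he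
  apply h
  refine ⟨k, ?_⟩
  have hNne : (N : ℂ) ≠ 0 := Nat.cast_ne_zero.mpr hN.ne'
  have h2 : (2 : ℂ) * Real.pi * Complex.I ≠ 0 := by
    simp [Real.pi_ne_zero, Complex.I_ne_zero]
  have : (n : ℂ) = (N : ℂ) * k := by
    field_simp at hk
    have h3 : 2 * (Real.pi : ℂ) * Complex.I * (n : ℂ)
        = 2 * (Real.pi : ℂ) * Complex.I * ((N : ℂ) * k) := by
      linear_combination (2 * (Real.pi : ℂ) * Complex.I) * hk
    exact mul_left_cancel₀ h2 h3
  exact_mod_cast this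

lemma gE_geom (N : ℕ) (hN : 0 < N) (a : ℤ) :
    ∑ s ∈ Finset.range N, gE N (a * s) = if (N : ℤ) ∣ a then (N : ℂ) else 0 := by
  have hpow : ∀ s : ℕ, gE N (a * s) = gE N a ^ s := by
    intro s
    rw [gE_eq, gE_eq, ← Complex.exp_nat_mul]
    congr 1; push_cast; ring
  split_ifs with h
  · rw [Finset.sum_congr rfl fun s _ => gE_dvd N hN (h.mul_right _)]
    simp
  · simp_rw [hpow]
    rw [geom_sum_eq (gE_ne_one N hN h)]
    have : gE N a ^ N = 1 := by
      rw [← hpow, gE_dvd N hN ⟨a, by ring⟩]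
    rw [this]; simp

lemma sum_range_shift_one (N : ℕ) (g : ℕ → ℂ) :
    ∑ t ∈ Finset.range N, g (t + 1) = ∑ t ∈ Finset.range N, g t + g N - g 0 := by
  have h1 := Finset.sum_range_succ g N
  have h2 := Finset.sum_range_succ' g N
  rw [h2] at h1
  linear_combination h1

lemma sum_shift (N : ℕ) (f : ℤ → ℂ) (hf : ∀ n : ℤ, f (n + N) = f n) (u : ℤ) :
    ∑ t ∈ Finset.range N, f (t + u) = ∑ t ∈ Finset.range N, f t := by
  induction u using Int.induction_on with
  | zero => simp
  | succ k ih =>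
      have key := sum_range_shift_one N (fun t => f (t + k))
      have e1 : ∀ t : ℕ, f ((t : ℤ) + (k + 1)) = f (((t + 1 : ℕ) : ℤ) + k) := by
        intro t; congr 1; push_cast; ring
      have e2 : f ((N : ℤ) + k) = f ((0 : ℕ) + k) := by
        have := hf k
        rw [show (k : ℤ) + N = (N : ℤ) + k by ring] at this
        simpa using this
      calc ∑ t ∈ Finset.range N, f (t + (k + 1))
          = ∑ t ∈ Finset.range N, f (((t + 1 : ℕ) : ℤ) + k) :=
            Finset.sum_congr rfl fun t _ => e1 t
        _ = ∑ t ∈ Finset.range N, f (t + k) + f ((N : ℤ) + k) - f ((0 : ℕ) + k) := key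
        _ = ∑ t ∈ Finset.range N, f (t + k) := by rw [e2]; ring
        _ = ∑ t ∈ Finset.range N, f t := ih
  | pred k ih =>
      have key := sum_range_shift_one N (fun t => f (t + (-k - 1)))
      have e1 : ∀ t : ℕ, f (((t + 1 : ℕ) : ℤ) + (-k - 1)) = f ((t : ℤ) + -(k : ℤ)) := by
        intro t; congr 1; push_cast; ring
      have e2 : f ((N : ℤ) + (-k - 1)) = f (((0 : ℕ) : ℤ) + (-k - 1)) := by
        have := hf (-k - 1)
        rw [show (-(k : ℤ) - 1) + N = (N : ℤ) + (-k - 1) by ring] at this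
        simpa using this
      have key2 : ∑ t ∈ Finset.range N, f ((t : ℤ) + -(k : ℤ))
          = ∑ t ∈ Finset.range N, f ((t : ℤ) + (-k - 1)) + f ((N : ℤ) + (-k - 1))
            - f (((0 : ℕ) : ℤ) + (-k - 1)) := by
        rw [← key]
        exact Finset.sum_congr rfl fun t _ => (e1 t).symm
      rw [e2] at key2
      have key3 : ∑ t ∈ Finset.range N, f ((t : ℤ) + (-(k : ℤ) - 1))
          = ∑ t ∈ Finset.range N, f ((t : ℤ) + -(k : ℤ)) := by rw [key2]; ring
      rw [key3, ih]

lemma count_lemma (N : ℕ) (hN : 0 < N) (c : ℤ) :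
    ((Finset.range N).filter (fun u : ℕ => (N : ℤ) ∣ 2 * c * (u : ℤ))).card
      = Int.gcd (2 * c) (N : ℤ) := by
  classical
  set g : ℕ := Int.gcd (2 * c) (N : ℤ) with hg
  have hNz : (N : ℤ) ≠ 0 := Int.natCast_ne_zero.mpr hN.ne'
  have hg0 : 0 < g := Int.gcd_pos_iff.mpr (Or.inr hNz)
  have hgNz : (g : ℤ) ∣ (N : ℤ) := Int.gcd_dvd_right _ _
  have hg2c : (g : ℤ) ∣ 2 * c := Int.gcd_dvd_left _ _
  have hgN : g ∣ N := Int.natCast_dvd_natCast.mp hgNz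
  set m : ℕ := N / g with hm
  have hNm : N = g * m := (Nat.mul_div_cancel' hgN).symm
  have hm0 : 0 < m := by
    rcases Nat.eq_zero_or_pos m with h0 | h0
    · rw [h0, Nat.mul_zero] at hNm; omega
    · exact h0
  have hgz : (g : ℤ) ≠ 0 := Int.natCast_ne_zero.mpr hg0.ne'
  have hNmZ : (N : ℤ) = (g : ℤ) * (m : ℤ) := by exact_mod_cast congrArg (Nat.cast : ℕ → ℤ) hNm
  have hmZ : ((m : ℕ) : ℤ) = (N : ℤ) / (g : ℤ) := by
    rw [hNmZ, Int.mul_ediv_cancel_left _ hgz]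
  set c' : ℤ := 2 * c / (g : ℤ) with hc'
  have hcop : Int.gcd c' ((m : ℕ) : ℤ) = 1 := by
    rw [hc', hmZ, hg]
    exact Int.gcd_div_gcd_div_gcd hg0
  have hc'eq : 2 * c = (g : ℤ) * c' := (Int.mul_ediv_cancel' hg2c).symm
  have hiff : ∀ u : ℕ, ((N : ℤ) ∣ 2 * c * (u : ℤ)) ↔ m ∣ u := by
    intro u
    rw [hNmZ, hc'eq]
    constructor
    · rintro hdvd
      have h1 : (m : ℤ) ∣ c' * u := by
        have : (g : ℤ) * (m : ℤ) ∣ (g : ℤ) * (c' * u) := by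
          rw [← mul_assoc]; exact hdvd
        exact (mul_dvd_mul_iff_left hgz).mp this
      have h2 : (m : ℤ) ∣ (u : ℤ) := by
        have h1' : (m : ℤ) ∣ (u : ℤ) * c' := by rwa [mul_comm] at h1
        exact Int.dvd_of_dvd_mul_left_of_gcd_one h1' ((Int.gcd_comm _ _).trans hcop)
      exact_mod_cast h2
    · rintro ⟨k, rfl⟩
      refine ⟨c' * k, ?_⟩
      push_cast; ring
  have hset : (Finset.range N).filter (fun u : ℕ => (N : ℤ) ∣ 2 * c * (u : ℤ))
      = (Finset.range g).image (fun j => j * m) := by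
    ext u
    simp only [Finset.mem_filter, Finset.mem_range, Finset.mem_image, hiff u]
    constructor
    · rintro ⟨hu, k, rfl⟩
      exact ⟨k, by rw [hNm] at hu; exact lt_of_mul_lt_mul_right (by rwa [mul_comm m k] at hu) (Nat.zero_le m) , (by ring)⟩
    · rintro ⟨j, hj, rfl⟩
      exact ⟨by rw [hNm]; exact Nat.mul_lt_mul_of_lt_of_le hj le_rfl hm0 |>.trans_le le_rfl, ⟨j, by ring⟩⟩
  rw [hset, Finset.card_image_of_injective _ (fun a b hab => Nat.eq_of_mul_eq_mul_right hm0 hab),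
    Finset.card_range]

/-- If `N ≥ 1` and `c ≢ 0 mod N`, then for any integer `d`,
`|G(c,d;N)| ≤ √(N · gcd(2c, N))`. -/
theorem abs_gauss_sum_le (N : ℕ) (hN : 0 < N) (c d : ℤ)
    (h : ¬ ((N : ℤ) ∣ c)) :
    ‖∑ t ∈ Finset.range N,
      Complex.exp (2 * Real.pi * Complex.I *
        ((c : ℂ) * (t : ℂ) ^ 2 + (d : ℂ) * (t : ℂ)) / (N : ℂ))‖ ≤
    Real.sqrt ((N : ℝ) * (Int.gcd (2 * c) (N : ℤ) : ℝ)) := by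
  classical
  set f : ℤ → ℂ := fun n => gE N (c * n ^ 2 + d * n) with hf
  set S : ℂ := ∑ t ∈ Finset.range N, f t with hS
  have hsum_eq : (∑ t ∈ Finset.range N,
      Complex.exp (2 * Real.pi * Complex.I *
        ((c : ℂ) * (t : ℂ) ^ 2 + (d : ℂ) * (t : ℂ)) / (N : ℂ))) = S := by
    refine Finset.sum_congr rfl fun t _ => ?_
    rw [hf]
    simp only
    rw [gE_eq]
    congr 1
    push_cast
    ring
  rw [hsum_eq]
  have hper : ∀ n : ℤ, f (n + N) = f n := by
    intro n
    simp only [hf]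
    have : c * (n + N) ^ 2 + d * (n + N)
        = (c * n ^ 2 + d * n) + (N : ℤ) * (2 * c * n + c * N + d) := by ring
    rw [this, gE_add, gE_dvd N hN ⟨_, rfl⟩, mul_one]
  -- key identity
  have hkey : S * (starRingEnd ℂ) S
      = ∑ u ∈ Finset.range N,
          gE N (c * u ^ 2 + d * u) * (if (N : ℤ) ∣ 2 * c * (u : ℤ) then (N : ℂ) else 0) := by
    have h1 : S * (starRingEnd ℂ) S
        = ∑ s ∈ Finset.range N, ∑ u ∈ Finset.range N, f (u + s) * (starRingEnd ℂ) (f s) := by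
      rw [hS, map_sum, Finset.mul_sum]
      refine Finset.sum_congr rfl fun s _ => ?_
      rw [← Finset.sum_mul]
      congr 1
      exact (sum_shift N f hper s).symm
    rw [h1, Finset.sum_comm]
    refine Finset.sum_congr rfl fun u _ => ?_
    have h2 : ∀ s : ℕ, f ((s : ℤ) + (u : ℤ)) * (starRingEnd ℂ) (f s)
        = gE N (c * u ^ 2 + d * u) * gE N ((2 * c * u) * s) := by
      intro s
      simp only [hf]
      rw [gE_conj, ← gE_add, ← gE_add]
      congr 1
      ring
    calc ∑ s ∈ Finset.range N, f ((u : ℤ) + (s : ℤ)) * (starRingEnd ℂ) (f s)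
        = ∑ s ∈ Finset.range N, gE N (c * u ^ 2 + d * u) * gE N ((2 * c * u) * s) := by
          refine Finset.sum_congr rfl fun s _ => ?_
          rw [show ((u : ℤ) + (s : ℤ)) = ((s : ℤ) + (u : ℤ)) by ring]
          exact h2 s
      _ = gE N (c * u ^ 2 + d * u) * ∑ s ∈ Finset.range N, gE N ((2 * c * u) * s) := by
          rw [Finset.mul_sum]
      _ = gE N (c * u ^ 2 + d * u) * (if (N : ℤ) ∣ 2 * c * (u : ℤ) then (N : ℂ) else 0) := by
          rw [gE_geom N hN (2 * c * u)]
  -- bound normSq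
  have habs : Complex.normSq S ≤ (N : ℝ) * (Int.gcd (2 * c) (N : ℤ) : ℝ) := by
    have h3 : (Complex.normSq S : ℝ) = ‖S * (starRingEnd ℂ) S‖ := by
      rw [Complex.mul_conj]
      rw [Complex.norm_real, Real.norm_eq_abs, _root_.abs_of_nonneg (Complex.normSq_nonneg S)]
    rw [h3, hkey]
    calc ‖∑ u ∈ Finset.range N,
          gE N (c * u ^ 2 + d * u) * (if (N : ℤ) ∣ 2 * c * (u : ℤ) then (N : ℂ) else 0)‖
        ≤ ∑ u ∈ Finset.range N,
            ‖gE N (c * u ^ 2 + d * u) * (if (N : ℤ) ∣ 2 * c * (u : ℤ) then (N : ℂ) else 0)‖ := by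
          exact norm_sum_le _ _
      _ = ∑ u ∈ Finset.range N, (if (N : ℤ) ∣ 2 * c * (u : ℤ) then (N : ℝ) else 0) := by
          refine Finset.sum_congr rfl fun u _ => ?_
          rw [norm_mul, gE_abs, one_mul, apply_ite (norm : ℂ → ℝ), norm_zero, Complex.norm_natCast]
      _ = ((Finset.range N).filter (fun u : ℕ => (N : ℤ) ∣ 2 * c * (u : ℤ))).card * (N : ℝ) := by
          rw [← Finset.sum_filter, Finset.sum_const, nsmul_eq_mul]
      _ = (N : ℝ) * (Int.gcd (2 * c) (N : ℤ) : ℝ) := by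
          rw [count_lemma N hN c]; ring
  rw [Complex.norm_def]
  exact Real.sqrt_le_sqrt habs
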